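/- In the setting of the HV-AG transformation with stochastic transition rates (Σ_{y∈X} q(y|x,a) = 1 for all x, a) and bounded costs c: let φ be a stationary policy, let v̄^φ(x) denote the β̄-discounted cost of φ in the transformed MDP, and set h^φ(x) := μ(x)·(v̄^φ(x) − v̄^φ(ℓ)). Then the Poisson-type equation v̄^φ(ℓ) + h^φ(x) = c(x,φ(x)) + Σ_{y∈X} q(y|x,φ(x)) h^φ(y) holds for all x ∈ X, and consequently the long-run average cost w^φ(x) := limsup_{N→∞} (1/N) Σ_{n=0}^{N−1} Q_φⁿ c_φ(x) equals v̄^φ(ℓ) for every initial state x ∈ X. -/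

import Mathlib

open Filter

noncomputable def iterR {X : Type*} (P : X → X → ℝ) (f : X → ℝ) : ℕ → X → ℝ
  | 0 => f
  | n + 1 => fun x => ∑' y, P x y * iterR P f n y

section helpers

set_option linter.unusedSectionVars false
variable {Y : Type*} [DecidableEq Y]

lemma mySummable_mul_of_bound {p f : Y → ℝ} (hp0 : ∀ y, 0 ≤ p y) (hp : Summable p)
    {C : ℝ} (hf : ∀ y, |f y| ≤ C) : Summable (fun y => p y * f y) := by
  rw [← summable_abs_iff]
  refine Summable.of_nonneg_of_le (fun y => abs_nonneg _) (fun y => ?_) (hp.mul_right C)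
  rw [abs_mul, abs_of_nonneg (hp0 y)]
  exact mul_le_mul_of_nonneg_left (hf y) (hp0 y)

lemma myTsum_mul_bound {p f : Y → ℝ} (hp0 : ∀ y, 0 ≤ p y) (hp : HasSum p 1)
    {C : ℝ} (hf : ∀ y, |f y| ≤ C) : |∑' y, p y * f y| ≤ C := by
  have hs := mySummable_mul_of_bound hp0 hp.summable hf
  calc |∑' y, p y * f y| ≤ ∑' y, |p y * f y| := by
        have h := norm_tsum_le_tsum_norm (f := fun y => p y * f y)
          (by simpa only [Real.norm_eq_abs] using hs.abs)
        simpa only [Real.norm_eq_abs] using h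
    _ ≤ ∑' y, p y * C := by
        refine Summable.tsum_le_tsum (fun y => ?_) hs.abs (hp.summable.mul_right C)
        rw [abs_mul, abs_of_nonneg (hp0 y)]
        exact mul_le_mul_of_nonneg_left (hf y) (hp0 y)
    _ = C := by rw [hp.summable.tsum_mul_right, hp.tsum_eq, one_mul]

lemma myIterR_bound {P : Y → Y → ℝ} (h0 : ∀ x y, 0 ≤ P x y) (h1 : ∀ x, HasSum (P x) 1)
    {f : Y → ℝ} {C : ℝ} (hf : ∀ x, |f x| ≤ C) : ∀ n x, |iterR P f n x| ≤ C := by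
  intro n
  induction n with
  | zero => exact hf
  | succ n ih => exact fun x => myTsum_mul_bound (h0 x) (h1 x) ih

lemma myHasSum_option {f : Option Y → ℝ} {a : ℝ}
    (h : HasSum (fun x => f (some x)) a) : HasSum f (a + f none) := by
  have h1 : HasSum (fun y : Option Y => if y = none then f none else 0) (f none) :=
    hasSum_ite_eq none (f none)
  have h2 : HasSum (fun y : Option Y => Option.elim y 0 (fun x => f (some x))) a := by
    refine (Function.Injective.hasSum_iff (Option.some_injective Y) ?_).mp ?_
    · intro x hx
      cases x with
      | none => rfl
      | some x => exact absurd ⟨x, rfl⟩ hx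
    · exact h
  have := h2.add h1
  convert this using 1
  funext y
  cases y with
  | none => simp
  | some x => simp

lemma myTsum_option {f : Option Y → ℝ} (h : Summable fun x => f (some x)) :
    ∑' y, f y = f none + ∑' x, f (some x) := by
  rw [(myHasSum_option h.hasSum).tsum_eq, add_comm]

end helpers

set_option maxHeartbeats 1000000 in
theorem stmt7_aux {X A : Type*} [Countable X] [DecidableEq X] (ℓ : X)
    (q : X → A → X → ℝ) (hq0 : ∀ x a y, 0 ≤ q x a y)
    (hqsto : ∀ x a, HasSum (q x a) 1)
    (c : X → A → ℝ) (Cc : ℝ) (hc : ∀ x a, |c x a| ≤ Cc)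
    (K : ℝ) (hK : 1 ≤ K)
    (μ : X → ℝ) (hμ1 : ∀ x, 1 ≤ μ x) (hμK : ∀ x, μ x ≤ K)
    (β : ℝ) (hβl : (K - 1) / K ≤ β) (hβu : β < 1)
    (φ : X → A)
    (S : X → ℝ) (hS : ∀ x, S x = ∑' z, (if z = ℓ then 0 else q x (φ x) z * μ z))
    (hμS : ∀ x, 1 + S x ≤ μ x)
    (Pb : Option X → Option X → ℝ)
    (hPbss : ∀ x y, Pb (some x) (some y) =
      if y = ℓ then (μ x - 1 - S x) / (β * μ x) else q x (φ x) y * μ y / (β * μ x))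
    (hPbsn : ∀ x, Pb (some x) none = 1 - (μ x - 1) / (β * μ x))
    (hPbns : ∀ y, Pb none (some y) = 0)
    (hPbnn : Pb none none = 1)
    (cb : Option X → ℝ)
    (hcbs : ∀ x, cb (some x) = c x (φ x) / μ x) (hcbn : cb none = 0)
    (vbar : Option X → ℝ)
    (hvbar : ∀ x, vbar x = ∑' n : ℕ, β ^ n * iterR Pb cb n x) :
    (∀ x : X, vbar (some ℓ) + μ x * (vbar (some x) - vbar (some ℓ)) =
      c x (φ x) + ∑' y, q x (φ x) y * (μ y * (vbar (some y) - vbar (some ℓ)))) ∧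
    (∀ x : X,
      Filter.limsup (fun N : ℕ =>
          (1 / (N : ℝ)) * ∑ n ∈ Finset.range N,
            iterR (fun x y => q x (φ x) y) (fun x => c x (φ x)) n x) Filter.atTop
        = vbar (some ℓ)) := by
  have hK0 : (0:ℝ) < K := lt_of_lt_of_le zero_lt_one hK
  have hβ0 : 0 ≤ β := le_trans (div_nonneg (by linarith) hK0.le) hβl
  have hCc0 : 0 ≤ Cc := le_trans (abs_nonneg _) (hc ℓ (φ ℓ))
  have hμpos : ∀ x, 0 < μ x := fun x => lt_of_lt_of_le zero_lt_one (hμ1 x)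
  have hKβ : K * (1 - β) ≤ 1 := by
    rw [div_le_iff₀ hK0] at hβl; nlinarith
  have hqS : ∀ x, Summable (q x (φ x)) := fun x => (hqsto x (φ x)).summable
  have hμB : ∀ y, |μ y| ≤ K := fun y => by
    rw [abs_of_nonneg (hμpos y).le]; exact hμK y
  have hqμS : ∀ x, Summable (fun z => q x (φ x) z * μ z) := fun x =>
    mySummable_mul_of_bound (hq0 x (φ x)) (hqS x) hμB
  have hqμ0 : ∀ x z, 0 ≤ q x (φ x) z * μ z := fun x z =>
    mul_nonneg (hq0 x (φ x) z) (hμpos z).le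
  have hSsum : ∀ x, Summable (fun z => if z = ℓ then 0 else q x (φ x) z * μ z) := by
    intro x
    refine Summable.of_nonneg_of_le (fun z => ?_) (fun z => ?_) (hqμS x)
    · split
      · exact le_rfl
      · exact hqμ0 x z
    · split
      · exact hqμ0 x z
      · exact le_rfl
  have hS0 : ∀ x, 0 ≤ S x := by
    intro x; rw [hS]
    refine tsum_nonneg (fun z => ?_)
    split
    · exact le_rfl
    · exact hqμ0 x z
  have hSle : ∀ x, S x ≤ μ x - 1 := fun x => by linarith [hμS x]
  have hqμ_le_S : ∀ x z, z ≠ ℓ → q x (φ x) z * μ z ≤ S x := by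
    intro x z hz
    rw [hS]
    have := Summable.le_tsum (hSsum x) z (fun b _ => by
      split
      · exact le_rfl
      · exact hqμ0 x b)
    simpa [hz] using this
  -- the degenerate case β = 0
  have hzero : β = 0 → ∀ x, μ x = 1 := by
    intro hb x
    have : K ≤ 1 := by
      rw [hb, div_le_iff₀ hK0] at hβl; linarith
    have := hμK x; have := hμ1 x; linarith
  -- cancellation lemma
  have hcancel : ∀ x (N : ℝ), 0 ≤ N → N ≤ μ x - 1 → β * μ x * (N / (β * μ x)) = N := by
    intro x N h0 h1
    rcases eq_or_lt_of_le hβ0 with hb | hb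
    · have hμx := hzero hb.symm x
      have : N = 0 := by rw [hμx] at h1; linarith
      simp [this]
    · have hne : β * μ x ≠ 0 := (mul_pos hb (hμpos x)).ne'
      rw [mul_div_cancel₀ _ hne]
  -- nonnegativity of Pb
  have hPb0 : ∀ x y, 0 ≤ Pb x y := by
    intro x y
    match x, y with
    | some x, some y =>
      rw [hPbss]
      have hd : 0 ≤ β * μ x := mul_nonneg hβ0 (hμpos x).le
      split
      · exact div_nonneg (by linarith [hSle x]) hd
      · exact div_nonneg (hqμ0 x y) hd
    | some x, none =>
      rw [hPbsn]
      rcases eq_or_lt_of_le hβ0 with hb | hb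
      · rw [← hb]; simp
      · have hne : (0:ℝ) < β * μ x := mul_pos hb (hμpos x)
        rw [sub_nonneg, div_le_one hne]
        nlinarith [mul_le_mul_of_nonneg_right (hμK x) (by linarith : (0:ℝ) ≤ 1 - β)]
    | none, some y => rw [hPbns]
    | none, none => rw [hPbnn]; exact zero_le_one
  -- row sums of Pb
  have hPbrow : ∀ x, HasSum (Pb x) 1 := by
    intro x
    match x with
    | none =>
      have : Pb none = fun y => if y = none then 1 else 0 := by
        funext y
        match y with
        | none => simpa using hPbnn
        | some z => simpa using hPbns z
      rw [this]
      exact hasSum_ite_eq none 1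
    | some x =>
      have h1 : HasSum (fun y : X => if y = ℓ then μ x - 1 - S x else q x (φ x) y * μ y)
          (μ x - 1) := by
        have g1 : HasSum (fun y : X => if y = ℓ then 0 else q x (φ x) y * μ y) (S x) := by
          rw [hS]; exact (hSsum x).hasSum
        have g2 : HasSum (fun y : X => if y = ℓ then μ x - 1 - S x else 0) (μ x - 1 - S x) :=
          hasSum_ite_eq ℓ (μ x - 1 - S x)
        have hfun : (fun y : X => if y = ℓ then μ x - 1 - S x else q x (φ x) y * μ y)
            = fun y => (if y = ℓ then 0 else q x (φ x) y * μ y)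
              + (if y = ℓ then μ x - 1 - S x else 0) := by
          funext y; split <;> simp
        rw [hfun]
        convert g1.add g2 using 1
        ring
      have h2 : HasSum (fun y : X => Pb (some x) (some y)) ((μ x - 1) / (β * μ x)) := by
        have hfun : (fun y : X => Pb (some x) (some y))
            = fun y => (if y = ℓ then μ x - 1 - S x else q x (φ x) y * μ y) / (β * μ x) := by
          funext y; rw [hPbss]; split <;> rfl
        rw [hfun]
        exact h1.div_const (β * μ x)
      have h3 := myHasSum_option h2
      rw [hPbsn] at h3
      convert h3 using 1
      ring
  -- bound on cb
  have hcbB : ∀ x, |cb x| ≤ Cc := by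
    intro x
    match x with
    | none => rw [hcbn]; simpa using hCc0
    | some x =>
      rw [hcbs, abs_div, abs_of_nonneg (hμpos x).le]
      exact le_trans (div_le_self (abs_nonneg _) (hμ1 x)) (hc x (φ x))
  have hIB : ∀ n x, |iterR Pb cb n x| ≤ Cc := myIterR_bound hPb0 hPbrow hcbB
  -- summability of the series defining vbar
  have hvS : ∀ x, Summable (fun n : ℕ => β ^ n * iterR Pb cb n x) := by
    intro x
    rw [← summable_abs_iff]
    refine Summable.of_nonneg_of_le (fun n => abs_nonneg _) (fun n => ?_)
      ((summable_geometric_of_lt_one hβ0 hβu).mul_right Cc)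
    rw [abs_mul, abs_pow, abs_of_nonneg hβ0]
    exact mul_le_mul_of_nonneg_left (hIB n x) (by positivity)
  -- bound on vbar
  have hgeo : ∑' n : ℕ, β ^ n * Cc = (1 - β)⁻¹ * Cc := by
    rw [tsum_mul_right, tsum_geometric_of_lt_one hβ0 hβu]
  have hvB : ∀ x, |vbar x| ≤ (1 - β)⁻¹ * Cc := by
    intro x
    rw [hvbar]
    calc |∑' n : ℕ, β ^ n * iterR Pb cb n x| ≤ ∑' n : ℕ, |β ^ n * iterR Pb cb n x| := by
          have h := norm_tsum_le_tsum_norm (f := fun n : ℕ => β ^ n * iterR Pb cb n x)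
            (by simpa only [Real.norm_eq_abs] using (hvS x).abs)
          simpa only [Real.norm_eq_abs] using h
      _ ≤ ∑' n : ℕ, β ^ n * Cc := by
          refine Summable.tsum_le_tsum (fun n => ?_) (hvS x).abs
            ((summable_geometric_of_lt_one hβ0 hβu).mul_right Cc)
          rw [abs_mul, abs_pow, abs_of_nonneg hβ0]
          exact mul_le_mul_of_nonneg_left (hIB n x) (by positivity)
      _ = (1 - β)⁻¹ * Cc := hgeo
  -- vbar vanishes at the absorbing state
  have hiter_none : ∀ n, iterR Pb cb n none = 0 := by
    intro n
    induction n with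
    | zero => exact hcbn
    | succ n ih =>
      show (∑' y, Pb none y * iterR Pb cb n y) = 0
      have : (fun y => Pb none y * iterR Pb cb n y)
          = fun y => if y = none then iterR Pb cb n none else 0 := by
        funext y
        match y with
        | none => simp [hPbnn]
        | some z => simp [hPbns z]
      rw [this, tsum_ite_eq, ih]
  have hvnone : vbar none = 0 := by
    rw [hvbar]
    simp [hiter_none]
  -- summability of rows applied to vbar
  have hrowv : ∀ x, Summable (fun y => Pb x y * vbar y) := fun x =>
    mySummable_mul_of_bound (hPb0 x) (hPbrow x).summable hvB
  -- the fixed point equation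
  have hfix : ∀ x : Option X, vbar x = cb x + β * ∑' y, Pb x y * vbar y := by
    intro x
    have hrow := (hPbrow x).summable
    have habs : ∀ (n : ℕ) (y : Option X), |β ^ (n+1) * (Pb x y * iterR Pb cb n y)|
        ≤ (Cc * β ^ (n+1)) * Pb x y := by
      intro n y
      have : |β ^ (n+1) * (Pb x y * iterR Pb cb n y)|
          = (β ^ (n+1) * Pb x y) * |iterR Pb cb n y| := by
        rw [abs_mul, abs_mul, abs_pow, abs_of_nonneg hβ0, abs_of_nonneg (hPb0 x y), mul_assoc]
      rw [this]
      calc (β ^ (n+1) * Pb x y) * |iterR Pb cb n y| ≤ (β ^ (n+1) * Pb x y) * Cc :=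
            mul_le_mul_of_nonneg_left (hIB n y)
              (mul_nonneg (pow_nonneg hβ0 _) (hPb0 x y))
        _ = (Cc * β ^ (n+1)) * Pb x y := by ring
    have hGsum : Summable (fun p : ℕ × Option X => (Cc * β ^ (p.1+1)) * Pb x p.2) := by
      have hnn : 0 ≤ fun p : ℕ × Option X => (Cc * β ^ (p.1+1)) * Pb x p.2 := fun p =>
        mul_nonneg (mul_nonneg hCc0 (pow_nonneg hβ0 _)) (hPb0 x p.2)
      refine (summable_prod_of_nonneg hnn).mpr ⟨?_, ?_⟩
      · intro n
        simpa using hrow.mul_left (Cc * β ^ (n+1))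
      · have : (fun n : ℕ => ∑' y : Option X, (Cc * β ^ (n+1)) * Pb x y)
            = fun n : ℕ => (Cc * β) * β ^ n := by
          funext n
          rw [tsum_mul_left, (hPbrow x).tsum_eq, mul_one]
          ring
        rw [this]
        exact (summable_geometric_of_lt_one hβ0 hβu).mul_left _
    have hU : Summable (Function.uncurry fun (n : ℕ) (y : Option X) =>
        β ^ (n+1) * (Pb x y * iterR Pb cb n y)) := by
      rw [← summable_abs_iff]
      exact Summable.of_nonneg_of_le (fun p => abs_nonneg _)
        (fun p => habs p.1 p.2) hGsum
    have h1 : ∀ n : ℕ, Summable (fun y : Option X => β ^ (n+1) * (Pb x y * iterR Pb cb n y)) :=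
      fun n => (mySummable_mul_of_bound (hPb0 x) hrow (fun y => hIB n y)).mul_left _
    have h2 : ∀ y : Option X, Summable (fun n : ℕ => β ^ (n+1) * (Pb x y * iterR Pb cb n y)) := by
      intro y
      rw [← summable_abs_iff]
      refine Summable.of_nonneg_of_le (fun n => abs_nonneg _) (fun n => ?_)
        (((summable_geometric_of_lt_one hβ0 hβu).mul_left (Cc * β)).mul_right (Pb x y))
      refine le_trans (habs n y) (le_of_eq ?_)
      ring
    calc vbar x = ∑' n : ℕ, β ^ n * iterR Pb cb n x := hvbar x
      _ = β ^ 0 * iterR Pb cb 0 x + ∑' n : ℕ, β ^ (n+1) * iterR Pb cb (n+1) x :=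
          Summable.tsum_eq_zero_add (hvS x)
      _ = cb x + ∑' n : ℕ, β ^ (n+1) * ∑' y, Pb x y * iterR Pb cb n y := by
          simp only [iterR, pow_zero, one_mul]
      _ = cb x + ∑' n : ℕ, ∑' y, β ^ (n+1) * (Pb x y * iterR Pb cb n y) := by
          congr 1
          exact tsum_congr fun n => (tsum_mul_left).symm
      _ = cb x + ∑' y, ∑' n : ℕ, β ^ (n+1) * (Pb x y * iterR Pb cb n y) := by
          congr 1
          exact (Summable.tsum_comm' hU h1 h2).symm
      _ = cb x + ∑' y, (β * Pb x y) * ∑' n : ℕ, β ^ n * iterR Pb cb n y := by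
          congr 1
          refine tsum_congr fun y => ?_
          rw [← tsum_mul_left]
          refine tsum_congr fun n => ?_
          ring
      _ = cb x + β * ∑' y, Pb x y * vbar y := by
          congr 1
          rw [← tsum_mul_left]
          refine tsum_congr fun y => ?_
          rw [hvbar y]
          ring
  -- Part 1: the Poisson equation
  have hp1 : ∀ x : X, vbar (some ℓ) + μ x * (vbar (some x) - vbar (some ℓ)) =
      c x (φ x) + ∑' y, q x (φ x) y * (μ y * (vbar (some y) - vbar (some ℓ))) := by
    intro x
    have hvB' : ∀ y : X, |vbar (some y)| ≤ (1 - β)⁻¹ * Cc := fun y => hvB (some y)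
    have hsome : Summable (fun y : X => Pb (some x) (some y) * vbar (some y)) :=
      (hrowv (some x)).comp_injective (Option.some_injective X)
    have hopt : ∑' y : Option X, Pb (some x) y * vbar y
        = ∑' y : X, Pb (some x) (some y) * vbar (some y) := by
      rw [myTsum_option hsome, hvnone, mul_zero, zero_add]
    have e0 := hfix (some x)
    rw [hopt, hcbs] at e0
    have hcan1 : β * μ x * ((μ x - 1 - S x) / (β * μ x)) = μ x - 1 - S x :=
      hcancel x _ (by linarith [hSle x, hS0 x]) (by linarith [hS0 x])
    have hcan2 : ∀ y, y ≠ ℓ → β * μ x * (q x (φ x) y * μ y / (β * μ x)) = q x (φ x) y * μ y :=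
      fun y hy => hcancel x _ (hqμ0 x y) (le_trans (hqμ_le_S x y hy) (hSle x))
    have hs1 : Summable (fun y : X => β * μ x * (Pb (some x) (some y) * vbar (some y))) :=
      hsome.mul_left _
    have e2 : β * μ x * (∑' y : X, Pb (some x) (some y) * vbar (some y))
        = (μ x - 1 - S x) * vbar (some ℓ)
          + ∑' y : X, (if y = ℓ then 0 else q x (φ x) y * μ y * vbar (some y)) := by
      rw [← tsum_mul_left, Summable.tsum_eq_add_tsum_ite hs1 ℓ]
      congr 1
      · rw [hPbss, if_pos rfl, ← mul_assoc, hcan1]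
      · refine tsum_congr fun y => ?_
        by_cases hy : y = ℓ
        · rw [if_pos hy, if_pos hy]
        · rw [if_neg hy, if_neg hy, hPbss, if_neg hy, ← mul_assoc, hcan2 y hy]
    have e1 : μ x * vbar (some x) = c x (φ x)
        + ((μ x - 1 - S x) * vbar (some ℓ)
          + ∑' y : X, (if y = ℓ then 0 else q x (φ x) y * μ y * vbar (some y))) := by
      rw [← e2]
      rw [e0]
      field_simp [(hμpos x).ne']
    have hqv : Summable (fun y : X => q x (φ x) y * μ y * vbar (some y)) :=
      mySummable_mul_of_bound (hqμ0 x) (hqμS x) hvB'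
    have hW2 := hqμS x
    have hrhs : ∑' y : X, q x (φ x) y * (μ y * (vbar (some y) - vbar (some ℓ)))
        = (∑' y : X, q x (φ x) y * μ y * vbar (some y))
          - (∑' y : X, q x (φ x) y * μ y) * vbar (some ℓ) := by
      rw [← tsum_mul_right, ← Summable.tsum_sub hqv (hW2.mul_right _)]
      refine tsum_congr fun y => ?_
      ring
    have hsplit1 : ∑' y : X, q x (φ x) y * μ y * vbar (some y)
        = q x (φ x) ℓ * μ ℓ * vbar (some ℓ)
          + ∑' y : X, (if y = ℓ then 0 else q x (φ x) y * μ y * vbar (some y)) :=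
      Summable.tsum_eq_add_tsum_ite hqv ℓ
    have hsplit2 : ∑' y : X, q x (φ x) y * μ y = q x (φ x) ℓ * μ ℓ + S x := by
      rw [Summable.tsum_eq_add_tsum_ite hW2 ℓ, ← hS x]
    rw [hrhs, hsplit1, hsplit2]
    linear_combination e1
  refine ⟨hp1, ?_⟩
  intro x
  set Q : X → X → ℝ := fun a b => q a (φ a) b with hQdef
  set c' : X → ℝ := fun a => c a (φ a) with hc'def
  set hh : X → ℝ := fun y => μ y * (vbar (some y) - vbar (some ℓ)) with hhdef
  have hQ0 : ∀ z y, 0 ≤ Q z y := fun z y => hq0 z (φ z) y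
  have hQrow : ∀ z, HasSum (Q z) 1 := fun z => hqsto z (φ z)
  have hhB : ∀ y, |hh y| ≤ K * (2 * ((1 - β)⁻¹ * Cc)) := by
    intro y
    simp only [hhdef]
    rw [abs_mul]
    have h1 : |vbar (some y) - vbar (some ℓ)| ≤ 2 * ((1 - β)⁻¹ * Cc) := by
      calc |vbar (some y) - vbar (some ℓ)| ≤ |vbar (some y)| + |vbar (some ℓ)| :=
            abs_sub _ _
        _ ≤ 2 * ((1 - β)⁻¹ * Cc) := by linarith [hvB (some y), hvB (some ℓ)]
    exact mul_le_mul (hμB y) h1 (abs_nonneg _) hK0.le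
  have hIhB : ∀ n z, |iterR Q hh n z| ≤ K * (2 * ((1 - β)⁻¹ * Cc)) :=
    myIterR_bound hQ0 hQrow hhB
  have hPo : ∀ z, c' z = vbar (some ℓ) + hh z - ∑' y, Q z y * hh y := by
    intro z
    simp only [hc'def, hQdef, hhdef]
    linarith [hp1 z]
  have hiter : ∀ (n : ℕ) (z : X), iterR Q c' n z
      = vbar (some ℓ) + iterR Q hh n z - iterR Q hh (n+1) z := by
    intro n
    induction n with
    | zero =>
      intro z
      have h1 : iterR Q hh 1 z = ∑' y, Q z y * hh y := rfl
      have h0 : iterR Q hh 0 z = hh z := rfl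
      have h0' : iterR Q c' 0 z = c' z := rfl
      rw [h1, h0, h0', hPo z]
    | succ n ih =>
      intro z
      have h1 : Summable (fun y => Q z y * iterR Q hh n y) :=
        mySummable_mul_of_bound (hQ0 z) (hQrow z).summable (fun y => hIhB n y)
      have h2 : Summable (fun y => Q z y * iterR Q hh (n+1) y) :=
        mySummable_mul_of_bound (hQ0 z) (hQrow z).summable (fun y => hIhB (n+1) y)
      have h3 : Summable (fun y => Q z y * vbar (some ℓ)) :=
        (hQrow z).summable.mul_right _
      have e1 : iterR Q c' (n+1) z = ∑' y, Q z y * iterR Q c' n y := rfl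
      have e2 : iterR Q hh (n+2) z = ∑' y, Q z y * iterR Q hh (n+1) y := rfl
      have e3 : iterR Q hh (n+1) z = ∑' y, Q z y * iterR Q hh n y := rfl
      rw [e1]
      calc ∑' y, Q z y * iterR Q c' n y
          = ∑' y, (Q z y * vbar (some ℓ)
              + (Q z y * iterR Q hh n y - Q z y * iterR Q hh (n+1) y)) := by
            refine tsum_congr fun y => ?_
            rw [ih y]
            ring
        _ = (∑' y, Q z y * vbar (some ℓ))
              + ((∑' y, Q z y * iterR Q hh n y) - ∑' y, Q z y * iterR Q hh (n+1) y) := by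
            rw [Summable.tsum_add h3 (h1.sub h2), Summable.tsum_sub h1 h2]
        _ = vbar (some ℓ) + iterR Q hh (n+1) z - iterR Q hh (n+1+1) z := by
            rw [tsum_mul_right, (hQrow z).tsum_eq, one_mul, ← e3, ← e2]
            ring
  have htel : ∀ N : ℕ, ∑ n ∈ Finset.range N, iterR Q c' n x
      = N * vbar (some ℓ) + (hh x - iterR Q hh N x) := by
    intro N
    have h00 : iterR Q hh 0 x = hh x := rfl
    calc ∑ n ∈ Finset.range N, iterR Q c' n x
        = ∑ n ∈ Finset.range N,
            (vbar (some ℓ) + (iterR Q hh n x - iterR Q hh (n+1) x)) :=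
          Finset.sum_congr rfl fun n _ => by rw [hiter n x]; ring
      _ = N * vbar (some ℓ) + (hh x - iterR Q hh N x) := by
          rw [Finset.sum_add_distrib, Finset.sum_const, Finset.card_range,
            Finset.sum_range_sub' (fun n => iterR Q hh n x), h00, nsmul_eq_mul]
  have hT : Filter.Tendsto (fun N : ℕ =>
      (1 / (N : ℝ)) * ∑ n ∈ Finset.range N, iterR Q c' n x) Filter.atTop
      (nhds (vbar (some ℓ))) := by
    have h0 : Filter.Tendsto (fun N : ℕ =>
        vbar (some ℓ) + (hh x - iterR Q hh N x) / N) Filter.atTop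
        (nhds (vbar (some ℓ) + 0)) := by
      refine Filter.Tendsto.add tendsto_const_nhds ?_
      refine squeeze_zero_norm (fun N => ?_)
        (tendsto_const_div_atTop_nhds_zero_nat (2 * (K * (2 * ((1 - β)⁻¹ * Cc)))))
      rw [Real.norm_eq_abs, abs_div, Nat.abs_cast]
      rcases Nat.eq_zero_or_pos N with hN | hN
      · subst hN; simp
      · have hNpos : (0:ℝ) < N := by exact_mod_cast hN
        have hnum : |hh x - iterR Q hh N x| ≤ 2 * (K * (2 * ((1 - β)⁻¹ * Cc))) := by
          calc |hh x - iterR Q hh N x| ≤ |hh x| + |iterR Q hh N x| := abs_sub _ _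
            _ ≤ 2 * (K * (2 * ((1 - β)⁻¹ * Cc))) := by linarith [hhB x, hIhB N x]
        gcongr
    rw [add_zero] at h0
    refine Filter.Tendsto.congr' ?_ h0
    filter_upwards [Filter.eventually_ge_atTop 1] with N hN
    have hN0 : (N:ℝ) ≠ 0 := Nat.cast_ne_zero.mpr (by omega)
    rw [htel N]
    field_simp
  exact hT.limsup_eq


/-- Proposition 4: with stochastic transition probabilities, bounded costs,
and the HV-AG transformation, for any stationary policy `φ` the function
`h^φ(x) = μ(x)(v̄^φ(x) − v̄^φ(ℓ))` satisfies the Poisson equation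
`v̄^φ(ℓ) + h^φ(x) = c(x,φ(x)) + ∑_y q(y|x,φ(x)) h^φ(y)`, and the long-run average cost
`w^φ(x)` equals `v̄^φ(ℓ)` for every initial state `x`. -/
theorem stmt7 {X A : Type*} [Countable X] [DecidableEq X] (ℓ : X)
    (q : X → A → X → ℝ) (hq0 : ∀ x a y, 0 ≤ q x a y)
    (hqsto : ∀ x a, HasSum (q x a) 1)
    (c : X → A → ℝ) (Cc : ℝ) (hc : ∀ x a, |c x a| ≤ Cc)
    (K : ℝ) (hK : 1 ≤ K)
    (μ : X → ℝ) (hμ1 : ∀ x, 1 ≤ μ x) (hμK : ∀ x, μ x ≤ K)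
    (hμ : ∀ x a, 1 + ∑' y, (if y = ℓ then 0 else q x a y * μ y) ≤ μ x)
    (β : ℝ) (hβl : (K - 1) / K ≤ β) (hβu : β < 1)
    (φ : X → A) :
    letI Pb : Option X → Option X → ℝ := fun x y =>
      match x, y with
      | some x, some y =>
          if y = ℓ then
            (μ x - 1 - ∑' z, (if z = ℓ then 0 else q x (φ x) z * μ z)) / (β * μ x)
          else q x (φ x) y * μ y / (β * μ x)
      | some x, none => 1 - (μ x - 1) / (β * μ x)
      | none, some _ => 0
      | none, none => 1
    letI cb : Option X → ℝ := fun x =>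
      match x with
      | some x => c x (φ x) / μ x
      | none => 0
    letI vbar : Option X → ℝ := fun x => ∑' n : ℕ, β ^ n * iterR Pb cb n x
    letI h : X → ℝ := fun x => μ x * (vbar (some x) - vbar (some ℓ))
    (∀ x : X, vbar (some ℓ) + h x = c x (φ x) + ∑' y, q x (φ x) y * h y) ∧
    (∀ x : X,
      limsup (fun N : ℕ =>
          (1 / (N : ℝ)) * ∑ n ∈ Finset.range N,
            iterR (fun x y => q x (φ x) y) (fun x => c x (φ x)) n x) atTop
        = vbar (some ℓ)) := by
  exact stmt7_aux ℓ q hq0 hqsto c Cc hc K hK μ hμ1 hμK β hβl hβu φ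
    (fun x => ∑' z, (if z = ℓ then 0 else q x (φ x) z * μ z)) (fun x => rfl)
    (fun x => hμ x (φ x))
    (fun x y =>
      match x, y with
      | some x, some y =>
          if y = ℓ then
            (μ x - 1 - ∑' z, (if z = ℓ then 0 else q x (φ x) z * μ z)) / (β * μ x)
          else q x (φ x) y * μ y / (β * μ x)
      | some x, none => 1 - (μ x - 1) / (β * μ x)
      | none, some _ => 0
      | none, none => 1)
    (fun x y => rfl) (fun x => rfl) (fun y => rfl) rfl
    (fun x =>
      match x with
      | some x => c x (φ x) / μ x
      | none => 0)
    (fun x => rfl) rfl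
    _ (fun x => rfl)
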